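/- For all P > 0, 0 < N1 ≤ N2, and 0 ≤ α ≤ 1: C(αP/N1) + C((1-α)P/(αP + N2)) ≤ C(P/N1), where C(t) = (1/2)·log(1+t). -/

import Mathlib

noncomputable def C (t : ℝ) : ℝ := (1/2) * Real.log (1 + t)

theorem stmt_8 (P N1 N2 α : ℝ) (hP : 0 < P) (hN1 : 0 < N1) (hN12 : N1 ≤ N2)
    (hα : 0 ≤ α) (hα1 : α ≤ 1) :
    C (α * P / N1) + C ((1 - α) * P / (α * P + N2)) ≤ C (P / N1) := by
  unfold C
  have hα' : 0 ≤ 1 - α := by linarith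
  have h2 : 0 < α * P + N2 := by nlinarith
  have ha : (0:ℝ) < 1 + α * P / N1 := by positivity
  have hb : (0:ℝ) < 1 + (1 - α) * P / (α * P + N2) := by positivity
  have key : (1 + α * P / N1) * (1 + (1 - α) * P / (α * P + N2)) ≤ 1 + P / N1 := by
    rw [← sub_nonneg]
    have e : 1 + P / N1 - (1 + α * P / N1) * (1 + (1 - α) * P / (α * P + N2))
        = ((1 - α) * P * (N2 - N1)) / (N1 * (α * P + N2)) := by
      rw [div_eq_mul_inv _ (α * P + N2), eq_div_iff (by positivity)]
      have := mul_inv_cancel₀ h2.ne'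
      field_simp
      linear_combination (-(N1 * P)+ P*N1*α - P^2*α + P^2*α^2) * this
    rw [e]
    have hd : 0 ≤ N2 - N1 := by linarith
    positivity
  calc (1/2) * Real.log (1 + α * P / N1) + (1/2) * Real.log (1 + (1 - α) * P / (α * P + N2))
      = (1/2) * Real.log ((1 + α * P / N1) * (1 + (1 - α) * P / (α * P + N2))) := by
        rw [Real.log_mul ha.ne' hb.ne']; ring
    _ ≤ (1/2) * Real.log (1 + P / N1) := by
        have := Real.log_le_log (by positivity) key
        linarith
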